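/- The truncated-MBRW increment variances satisfy: (i) ρ_{N,k₀}(x,y) is nonincreasing in k₀ for each fixed N and x,y ∈ V_N; and (ii) limsup_{k₀→∞} limsup_{N→∞} sup{ρ_{N,k₀}(x,y) : x,y ∈ V_N, d^N(x,y) ≤ 2^{√k₀}} = 0. -/

import Mathlib

open MeasureTheory ProbabilityTheory
open scoped ENNReal NNReal Classical

noncomputable section

/-- The box `V_N = ([0,N-1] ∩ ℤ)²`. -/
def V (N : ℕ) : Finset (ℤ × ℤ) :=
  Finset.Icc 0 ((N : ℤ) - 1) ×ˢ Finset.Icc 0 ((N : ℤ) - 1)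

/-- The interior `V_N° = ((0,N-1) ∩ ℤ)²`. -/
def Vint (N : ℕ) : Finset (ℤ × ℤ) :=
  Finset.Ioo 0 ((N : ℤ) - 1) ×ˢ Finset.Ioo 0 ((N : ℤ) - 1)

/-- The maximum of `f` over a finite set (`0` for the empty set). -/
def fmax (s : Finset (ℤ × ℤ)) (f : ℤ × ℤ → ℝ) : ℝ :=
  if h : s.Nonempty then s.sup' h f else 0

/-- The four nearest-neighbour steps of simple random walk on ℤ². -/
def nbrs : Finset (ℤ × ℤ) := {(1, 0), (-1, 0), (0, 1), (0, -1)}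

/-- `killedKernel N m x y = P^x(w_j ∈ V_N° for all j < m, and w_m = y)`, the m-step
transition function of simple random walk killed upon leaving `V_N°`. -/
def killedKernel (N : ℕ) : ℕ → ℤ × ℤ → ℤ × ℤ → ℝ
  | 0, x, y => if x = y then 1 else 0
  | m + 1, x, y =>
      if x ∈ Vint N then (1 / 4 : ℝ) * ∑ d ∈ nbrs, killedKernel N m (x + d) y else 0

/-- The Green function `G_N(x,y) = E^x[∑_{m=0}^τ 1_{w_m = y}]`, with `G_N(x,·) = 0`
for `x ∈ ∂V_N`. -/
def greenFn (N : ℕ) (x y : ℤ × ℤ) : ℝ :=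
  if x ∈ Vint N then ∑' m : ℕ, killedKernel N m x y else 0

/-- `x ∼_N y`, i.e. `x - y ∈ (Nℤ)²`. -/
def simRel (N : ℕ) (x y : ℤ × ℤ) : Prop :=
  (N : ℤ) ∣ (x.1 - y.1) ∧ (N : ℤ) ∣ (x.2 - y.2)

/-- `torusKernel N m x y = P^x(w_m ∼_N y)` for simple random walk on ℤ². -/
def torusKernel (N : ℕ) : ℕ → ℤ × ℤ → ℤ × ℤ → ℝ
  | 0, x, y => if simRel N x y then 1 else 0
  | m + 1, x, y => (1 / 4 : ℝ) * ∑ d ∈ nbrs, torusKernel N m (x + d) y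

/-- The torus Green function `Ḡ_N(x,y) = E^x[∑_{m=0}^{τ'} 1_{w_m ∼_N y}]`, where `τ'` is
an independent exponential time of parameter `1/N²` (so `P(τ' ≥ m) = exp(-m/N²)`). -/
def torusGreen (N : ℕ) (x y : ℤ × ℤ) : ℝ :=
  ∑' m : ℕ, Real.exp (-(m : ℝ) / (N : ℝ) ^ 2) * torusKernel N m x y

/-- Euclidean norm on ℤ². -/
def euclNorm (v : ℤ × ℤ) : ℝ := Real.sqrt ((v.1 : ℝ) ^ 2 + (v.2 : ℝ) ^ 2)

/-- ℓ∞ norm on ℤ². -/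
def supNorm (v : ℤ × ℤ) : ℝ := max |(v.1 : ℝ)| |(v.2 : ℝ)|

/-- Torus (euclidean) distance `d^N(x,y) = min{‖x-z‖ : z ∼_N y}`. -/
def dN (N : ℕ) (x y : ℤ × ℤ) : ℝ :=
  sInf {r : ℝ | ∃ z : ℤ × ℤ, simRel N z y ∧ r = euclNorm (x - z)}

/-- Torus ℓ∞ distance `d_∞^N(x,y) = min{‖x-z‖_∞ : z ∼_N y}`. -/
def dNinf (N : ℕ) (x y : ℤ × ℤ) : ℝ :=
  sInf {r : ℝ | ∃ z : ℤ × ℤ, simRel N z y ∧ r = supNorm (x - z)}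

/-- `{X_x}_{x ∈ s}` is a centered Gaussian field with covariance `G` on `s`: every finite
linear combination of the `X_x`, `x ∈ s`, is a centered Gaussian variable, and the
covariances on `s` are given by `G`. -/
def IsCenteredGaussianFieldOn {Ω : Type} [MeasurableSpace Ω] (P : Measure Ω)
    (X : ℤ × ℤ → Ω → ℝ) (s : Finset (ℤ × ℤ)) (G : ℤ × ℤ → ℤ × ℤ → ℝ) : Prop :=
  (∀ x ∈ s, Measurable (X x)) ∧
  (∀ t : Finset (ℤ × ℤ), t ⊆ s → ∀ c : ℤ × ℤ → ℝ, ∃ v : ℝ≥0,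
      Measure.map (fun ω => ∑ i ∈ t, c i * X i ω) P = gaussianReal 0 v) ∧
  ∀ x ∈ s, ∀ y ∈ s, ∫ ω, X x ω * X y ω ∂P = G x y

/-- The lower-left corners of the squares of side `2^k` (elements of `B_k`) containing `z`. -/
def corners (k : ℕ) (z : ℤ × ℤ) : Finset (ℤ × ℤ) :=
  Finset.Icc (z - ((2 : ℤ) ^ k - 1, (2 : ℤ) ^ k - 1)) z

/-- Reduction of a corner modulo `N`, identifying a square of `B_k` with the unique
`B' ∈ B_k^N` with `B ∼_N B'`. -/
def modN (N : ℕ) (v : ℤ × ℤ) : ℤ × ℤ := (v.1 % (N : ℤ), v.2 % (N : ℤ))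

/-- Partial sums of the MBRW: `∑_{k=lo}^{hi} ∑_{B ∈ B_k(z)} b_{k,B}^N`, where a square is
identified with its lower-left corner and `b^N_{k,B} = b_{k,B'}` for `B ∼_N B' ∈ B_k^N`.
In particular `mbrwSum N 0 n b = S^N`, `mbrwSum N k₀ n b = S^{N,k₀}` and
`mbrwSum N (n-j) n b = S^N(j)`. -/
def mbrwSum {Ω : Type} (N lo hi : ℕ) (b : ℕ → ℤ × ℤ → Ω → ℝ) (z : ℤ × ℤ) (ω : Ω) : ℝ :=
  ∑ k ∈ Finset.Icc lo hi, ∑ v ∈ corners k z, b k (modN N v) ω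

/-- `{b_{k,B}}_{0 ≤ k ≤ n, B ∈ B_k^N}` (squares identified with their lower-left corners,
which lie in `V_N`) is a family of independent centered Gaussian variables of variance
`2^{-2k}`: the family is jointly Gaussian and the covariances are
`E[b_{k,v} b_{k',v'}] = 2^{-2k} 1_{(k,v) = (k',v')}`. -/
def IsMBRWBase {Ω : Type} [MeasurableSpace Ω] (P : Measure Ω) (N n : ℕ)
    (b : ℕ → ℤ × ℤ → Ω → ℝ) : Prop :=
  (∀ k ≤ n, ∀ v ∈ V N, Measurable (b k v)) ∧
  (∀ t : Finset (ℕ × (ℤ × ℤ)), (∀ p ∈ t, p.1 ≤ n ∧ p.2 ∈ V N) →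
      ∀ c : ℕ × (ℤ × ℤ) → ℝ, ∃ v : ℝ≥0,
      Measure.map (fun ω => ∑ p ∈ t, c p * b p.1 p.2 ω) P = gaussianReal 0 v) ∧
  ∀ k k' : ℕ, ∀ v v' : ℤ × ℤ, k ≤ n → k' ≤ n → v ∈ V N → v' ∈ V N →
    ∫ ω, b k v ω * b k' v' ω ∂P = if k = k' ∧ v = v' then ((2 : ℝ) ^ (2 * k))⁻¹ else 0

/-- `V_N' = V_{N/2} + (N/4, N/4)`. -/
def V' (N : ℕ) : Finset (ℤ × ℤ) :=
  (V (N / 2)).image fun z => z + (((N / 4 : ℕ) : ℤ), ((N / 4 : ℕ) : ℤ))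

/-- `A_n = 2√(log 2)·n − (3/(4√(log 2)))·log n`. -/
def An (n : ℕ) : ℝ :=
  2 * Real.sqrt (Real.log 2) * n - 3 / (4 * Real.sqrt (Real.log 2)) * Real.log n

/-- The barrier `L_n(j)`: `L_n(0) = L_n(n) = 0`, `L_n(j) = c₅ log j` for `1 ≤ j ≤ ⌊n/2⌋`
and `L_n(j) = c₅ log (n-j)` for `⌊n/2⌋ < j ≤ n-1`. -/
def Lfun (c₅ : ℝ) (n j : ℕ) : ℝ :=
  if j = 0 ∨ j = n then 0
  else if j ≤ n / 2 then c₅ * Real.log j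
  else c₅ * Real.log ((n - j : ℕ) : ℝ)

lemma cast_two_pow (k : ℕ) : ((2 ^ k : ℕ) : ℤ) = (2:ℤ) ^ k := by push_cast; ring

lemma modN_mem_V {N : ℕ} (hN : 0 < N) (v : ℤ × ℤ) : modN N v ∈ V N := by
  have hN' : (0:ℤ) < (N:ℤ) := by exact_mod_cast hN
  simp only [V, modN, Finset.mem_product, Finset.mem_Icc]
  have h1 := Int.emod_lt_of_pos v.1 hN'
  have h2 := Int.emod_lt_of_pos v.2 hN'
  have h3 := Int.emod_nonneg v.1 hN'.ne'
  have h4 := Int.emod_nonneg v.2 hN'.ne'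
  omega

lemma modN_eq_of_emod {N : ℕ} {a b : ℤ} (h : a % (N:ℤ) = b % (N:ℤ)) : (N:ℤ) ∣ a - b :=
  Int.dvd_of_emod_eq_zero (Int.emod_eq_emod_iff_emod_sub_eq_zero.mp h)

lemma mem_corners {k : ℕ} {v x : ℤ × ℤ} :
    v ∈ corners k x ↔ (x.1 - ((2:ℤ)^k - 1) ≤ v.1 ∧ v.1 ≤ x.1)
      ∧ (x.2 - ((2:ℤ)^k - 1) ≤ v.2 ∧ v.2 ≤ x.2) := by
  simp only [corners, Finset.mem_Icc, Prod.le_def, Prod.fst_sub, Prod.snd_sub]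
  tauto

lemma corners_injOn {N k : ℕ} (h : 2 ^ k ≤ N) (x : ℤ × ℤ) :
    Set.InjOn (modN N) (corners k x) := by
  intro v hv v' hv' hmod
  rw [Finset.mem_coe, mem_corners] at hv hv'
  have h1 : (N:ℤ) ∣ v.1 - v'.1 := modN_eq_of_emod (congrArg Prod.fst hmod)
  have h2 : (N:ℤ) ∣ v.2 - v'.2 := modN_eq_of_emod (congrArg Prod.snd hmod)
  have hNk : ((2^k : ℕ):ℤ) ≤ (N:ℤ) := by exact_mod_cast h
  rw [cast_two_pow] at hNk
  have e1 : v.1 = v'.1 := by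
    have := Int.eq_zero_of_abs_lt_dvd h1 (by
      rw [← cast_two_pow] at hv hv' hNk
      have hpos : 1 ≤ 2 ^ k := Nat.one_le_two_pow
      rw [abs_lt]; omega)
    omega
  have e2 : v.2 = v'.2 := by
    have := Int.eq_zero_of_abs_lt_dvd h2 (by
      rw [← cast_two_pow] at hv hv' hNk
      have hpos : 1 ≤ 2 ^ k := Nat.one_le_two_pow
      rw [abs_lt]; omega)
    omega
  exact Prod.ext e1 e2

lemma card_Icc_int (a : ℤ) (k : ℕ) : (Finset.Icc (a - ((2:ℤ)^k - 1)) a).card = 2 ^ k := by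
  rw [Int.card_Icc, ← cast_two_pow]
  have hpos : 1 ≤ 2 ^ k := Nat.one_le_two_pow
  omega

lemma card_corners (k : ℕ) (x : ℤ × ℤ) : (corners k x).card = 2 ^ k * 2 ^ k := by
  rw [corners, Finset.card_Icc_prod]
  simp only [Prod.fst_sub, Prod.snd_sub]
  rw [card_Icc_int, card_Icc_int]

lemma card_image_corners {N k : ℕ} (h : 2 ^ k ≤ N) (x : ℤ × ℤ) :
    ((corners k x).image (modN N)).card = 2 ^ k * 2 ^ k := by
  rw [Finset.card_image_of_injOn (corners_injOn h x), card_corners]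

def ind (N k : ℕ) (x w : ℤ × ℤ) : ℝ := if w ∈ (corners k x).image (modN N) then 1 else 0

lemma image_corners_subset {N k : ℕ} (hN : 0 < N) (x : ℤ × ℤ) :
    (corners k x).image (modN N) ⊆ V N :=
  Finset.image_subset_iff.mpr fun v _ => modN_mem_V hN v

lemma sum_corners_eq {N k : ℕ} (h : 2 ^ k ≤ N) (hN : 0 < N) (x : ℤ × ℤ) (g : ℤ × ℤ → ℝ) :
    ∑ v ∈ corners k x, g (modN N v) = ∑ w ∈ V N, ind N k x w * g w := by
  have h1 : ∑ v ∈ corners k x, g (modN N v)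
      = ∑ w ∈ (corners k x).image (modN N), g w :=
    (Finset.sum_image fun a ha b hbb hab => corners_injOn h x ha hbb hab).symm
  rw [h1]
  have h2 : ∀ w ∈ V N, ind N k x w * g w
      = if w ∈ (corners k x).image (modN N) then g w else 0 := by
    intro w _; by_cases hw : w ∈ (corners k x).image (modN N) <;> simp [ind, hw]
  rw [Finset.sum_congr rfl h2, Finset.sum_ite_mem,
    Finset.inter_eq_right.mpr (image_corners_subset hN x)]

lemma mbrw_repr {Ω : Type} {N : ℕ} (lo hi : ℕ) (hhi : 2 ^ hi ≤ N) (hN : 0 < N)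
    (b : ℕ → ℤ × ℤ → Ω → ℝ) (x : ℤ × ℤ) (ω : Ω) :
    mbrwSum N lo hi b x ω
      = ∑ p ∈ Finset.Icc lo hi ×ˢ V N, ind N p.1 x p.2 * b p.1 p.2 ω := by
  rw [Finset.sum_product]
  refine Finset.sum_congr rfl fun k hk => ?_
  have hk' : 2 ^ k ≤ N :=
    le_trans (Nat.pow_le_pow_right (by norm_num) (Finset.mem_Icc.mp hk).2) hhi
  exact sum_corners_eq hk' hN x (fun w => b k w ω)

lemma integrable_sq_gaussian (v : ℝ≥0) :
    Integrable (fun x : ℝ => x ^ 2) (gaussianReal 0 v) := by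
  by_cases hv : v = 0
  · subst hv; rw [gaussianReal_zero_var]
    refine ⟨(measurable_id.pow_const 2).aestronglyMeasurable, ?_⟩
    rw [HasFiniteIntegral, lintegral_dirac]
    simp
  · rw [gaussianReal_of_var_ne_zero _ hv]
    rw [integrable_withDensity_iff (measurable_gaussianPDF _ _)
      (Filter.Eventually.of_forall fun x => ENNReal.ofReal_lt_top)]
    have hb : (0:ℝ) < 1 / (2 * (v:ℝ)) := by
      have : (0:ℝ) < (v:ℝ) := lt_of_le_of_ne (v.coe_nonneg) (by exact_mod_cast (Ne.symm hv))
      positivity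
    have h1 := (integrable_rpow_mul_exp_neg_mul_sq hb (s := 2) (by norm_num)).const_mul
      ((Real.sqrt (2 * Real.pi * v))⁻¹)
    refine h1.congr (Filter.Eventually.of_forall fun x => ?_)
    have habs : |x| ^ (2:ℝ) = x ^ 2 := by
      rw [show (2:ℝ) = ((2:ℕ):ℝ) by norm_num, Real.rpow_natCast, sq_abs]
    have htr : (ENNReal.ofReal (gaussianPDFReal 0 v x)).toReal = gaussianPDFReal 0 v x :=
      ENNReal.toReal_ofReal (gaussianPDFReal_nonneg _ _ _)
    simp only [gaussianPDF]
    rw [htr]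
    simp only [gaussianPDFReal, habs]
    rw [sub_zero]
    ring_nf
    congr 2
    norm_num

lemma memLp2_gaussian (v : ℝ≥0) : MemLp (id : ℝ → ℝ) 2 (gaussianReal 0 v) :=
  (memLp_two_iff_integrable_sq aestronglyMeasurable_id).mpr (integrable_sq_gaussian v)

lemma memLp2_of_gaussian {Ω : Type} [MeasurableSpace Ω] {P : Measure Ω} {f : Ω → ℝ}
    (hf : Measurable f) {v : ℝ≥0} (h : Measure.map f P = gaussianReal 0 v) :
    MemLp f 2 P := by
  have := (memLp_map_measure_iff (f := f) (g := id) aestronglyMeasurable_id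
    hf.aemeasurable).mp (by rw [h]; exact memLp2_gaussian v)
  simpa using this

lemma memLp2_mul {Ω : Type} [MeasurableSpace Ω] {P : Measure Ω} {f g : Ω → ℝ}
    (hf : MemLp f 2 P) (hg : MemLp g 2 P) :
    Integrable (fun ω => f ω * g ω) P := by
  have h := (((hf.add hg).integrable_sq.sub hf.integrable_sq).sub hg.integrable_sq).const_mul
    ((1:ℝ)/2)
  refine h.congr (Filter.Eventually.of_forall fun ω => ?_)
  simp only [Pi.add_apply, Pi.sub_apply]
  ring

lemma integral_sq_sum {Ω : Type} [MeasurableSpace Ω] {P : Measure Ω} {ι : Type*}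
    (t : Finset ι) (f : ι → Ω → ℝ) (hf : ∀ i ∈ t, MemLp (f i) 2 P) (c : ι → ℝ) :
    ∫ ω, (∑ i ∈ t, c i * f i ω) ^ 2 ∂P
      = ∑ i ∈ t, ∑ j ∈ t, c i * c j * ∫ ω, f i ω * f j ω ∂P := by
  have hint : ∀ i ∈ t, ∀ j ∈ t,
      Integrable (fun ω => c i * c j * (f i ω * f j ω)) P := fun i hi j hj =>
    (memLp2_mul (hf i hi) (hf j hj)).const_mul _
  calc ∫ ω, (∑ i ∈ t, c i * f i ω) ^ 2 ∂P
      = ∫ ω, ∑ i ∈ t, ∑ j ∈ t, c i * c j * (f i ω * f j ω) ∂P := by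
        congr 1; funext ω
        rw [sq, Finset.sum_mul_sum]
        exact Finset.sum_congr rfl fun i _ => Finset.sum_congr rfl fun j _ => by ring
    _ = ∑ i ∈ t, ∑ j ∈ t, c i * c j * ∫ ω, f i ω * f j ω ∂P := by
        rw [integral_finset_sum t fun i hi => integrable_finset_sum t fun j hj => hint i hi j hj]
        refine Finset.sum_congr rfl fun i hi => ?_
        rw [integral_finset_sum t fun j hj => hint i hi j hj]
        exact Finset.sum_congr rfl fun j hj => integral_const_mul _ _

lemma memLp2_base {Ω : Type} [MeasurableSpace Ω] {P : Measure Ω} {N n : ℕ}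
    {b : ℕ → ℤ × ℤ → Ω → ℝ} (hb : IsMBRWBase P N n b) {k : ℕ} {w : ℤ × ℤ}
    (hk : k ≤ n) (hw : w ∈ V N) : MemLp (b k w) 2 P := by
  obtain ⟨v, hv⟩ := hb.2.1 {(k, w)} (by simp [hk, hw]) (fun _ => 1)
  have he : (fun ω => ∑ p ∈ ({(k, w)} : Finset (ℕ × (ℤ × ℤ))), (1:ℝ) * b p.1 p.2 ω)
      = b k w := by funext ω; simp
  exact memLp2_of_gaussian (hb.1 k hk w hw) (he ▸ hv)

lemma sum_indicator_card {N : ℕ} (s : Finset (ℤ × ℤ)) (hs : s ⊆ V N) :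
    ∑ w ∈ V N, (if w ∈ s then (1:ℝ) else 0) = s.card := by
  rw [Finset.sum_ite_mem, Finset.inter_eq_right.mpr hs, Finset.sum_const, nsmul_eq_mul, mul_one]

lemma rho_formula {Ω : Type} [MeasurableSpace Ω] {P : Measure Ω} {n : ℕ}
    {b : ℕ → ℤ × ℤ → Ω → ℝ} (hb : IsMBRWBase P (2 ^ n) n b) (k₀ : ℕ) (x y : ℤ × ℤ) :
    ∫ ω, (mbrwSum (2 ^ n) k₀ n b x ω - mbrwSum (2 ^ n) k₀ n b y ω) ^ 2 ∂P
      = ∑ k ∈ Finset.Icc k₀ n,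
          ((((corners k x).image (modN (2 ^ n))).card : ℝ)
            + (((corners k y).image (modN (2 ^ n))).card : ℝ)
            - 2 * (((corners k x).image (modN (2 ^ n))
                ∩ (corners k y).image (modN (2 ^ n))).card : ℝ))
          * ((2 : ℝ) ^ (2 * k))⁻¹ := by
  have hN0 : 0 < 2 ^ n := Nat.pow_pos (by norm_num)
  set T : Finset (ℕ × (ℤ × ℤ)) := Finset.Icc k₀ n ×ˢ V (2 ^ n) with hT
  set c : ℕ × (ℤ × ℤ) → ℝ := fun p => ind (2 ^ n) p.1 x p.2 - ind (2 ^ n) p.1 y p.2 with hc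
  have hmemT : ∀ p ∈ T, p.1 ≤ n ∧ p.2 ∈ V (2 ^ n) := by
    intro p hp
    rw [hT, Finset.mem_product] at hp
    exact ⟨(Finset.mem_Icc.mp hp.1).2, hp.2⟩
  have h1 : ∫ ω, (mbrwSum (2 ^ n) k₀ n b x ω - mbrwSum (2 ^ n) k₀ n b y ω) ^ 2 ∂P
      = ∫ ω, (∑ p ∈ T, c p * b p.1 p.2 ω) ^ 2 ∂P := by
    congr 1; funext ω
    rw [mbrw_repr k₀ n le_rfl hN0 b x ω, mbrw_repr k₀ n le_rfl hN0 b y ω,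
      ← Finset.sum_sub_distrib]
    rw [hT]
    have hterm : ∀ p ∈ Finset.Icc k₀ n ×ˢ V (2 ^ n),
        ind (2 ^ n) p.1 x p.2 * b p.1 p.2 ω - ind (2 ^ n) p.1 y p.2 * b p.1 p.2 ω
          = c p * b p.1 p.2 ω := fun p _ => (sub_mul _ _ _).symm
    rw [Finset.sum_congr rfl hterm]
  rw [h1, integral_sq_sum T _ (fun p hp => memLp2_base hb (hmemT p hp).1 (hmemT p hp).2) c]
  have h2 : ∀ p ∈ T, ∑ q ∈ T, c p * c q * ∫ ω, b p.1 p.2 ω * b q.1 q.2 ω ∂P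
      = c p ^ 2 * ((2 : ℝ) ^ (2 * p.1))⁻¹ := by
    intro p hp
    have hcov : ∀ q ∈ T, c p * c q * ∫ ω, b p.1 p.2 ω * b q.1 q.2 ω ∂P
        = c p * c q * (if p = q then ((2 : ℝ) ^ (2 * p.1))⁻¹ else 0) := by
      intro q hq
      rw [hb.2.2 p.1 q.1 p.2 q.2 (hmemT p hp).1 (hmemT q hq).1 (hmemT p hp).2 (hmemT q hq).2]
      congr 1
      simp [Prod.ext_iff]
    rw [Finset.sum_congr rfl hcov,
      Finset.sum_eq_single p (fun q _ hqp => by rw [if_neg (fun h => hqp h.symm), mul_zero])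
        (fun hp' => absurd hp hp')]
    rw [if_pos rfl, sq]
  rw [Finset.sum_congr rfl h2, hT, Finset.sum_product]
  refine Finset.sum_congr rfl fun k hk => ?_
  have hk' : 2 ^ k ≤ 2 ^ n := Nat.pow_le_pow_right (by norm_num) (Finset.mem_Icc.mp hk).2
  have hred : ∑ w ∈ V (2 ^ n), c (k, w) ^ 2 * ((2:ℝ) ^ (2 * (k, w).1))⁻¹
      = (∑ w ∈ V (2 ^ n), c (k, w) ^ 2) * ((2:ℝ) ^ (2 * k))⁻¹ := by
    rw [Finset.sum_mul]
  rw [hred]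
  congr 1
  have hpt : ∀ w ∈ V (2 ^ n), c (k, w) ^ 2
      = (if w ∈ (corners k x).image (modN (2 ^ n)) then (1:ℝ) else 0)
        + (if w ∈ (corners k y).image (modN (2 ^ n)) then (1:ℝ) else 0)
        - 2 * (if w ∈ (corners k x).image (modN (2 ^ n))
            ∩ (corners k y).image (modN (2 ^ n)) then (1:ℝ) else 0) := by
    intro w _
    have hcw : c (k, w) = ind (2 ^ n) k x w - ind (2 ^ n) k y w := rfl
    rw [hcw]
    unfold ind
    by_cases hx : w ∈ (corners k x).image (modN (2 ^ n)) <;>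
      by_cases hy : w ∈ (corners k y).image (modN (2 ^ n))
    · rw [if_pos hx, if_pos hy, if_pos (Finset.mem_inter.mpr ⟨hx, hy⟩)]; ring
    · rw [if_pos hx, if_neg hy, if_neg (fun h => hy (Finset.mem_inter.mp h).2)]; ring
    · rw [if_neg hx, if_pos hy, if_neg (fun h => hx (Finset.mem_inter.mp h).1)]; ring
    · rw [if_neg hx, if_neg hy, if_neg (fun h => hx (Finset.mem_inter.mp h).1)]; ring
  rw [Finset.sum_congr rfl hpt, Finset.sum_sub_distrib, Finset.sum_add_distrib,
    ← Finset.mul_sum, sum_indicator_card _ (image_corners_subset hN0 x),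
    sum_indicator_card _ (image_corners_subset hN0 y),
    sum_indicator_card _ (le_trans (Finset.inter_subset_left) (image_corners_subset hN0 x))]

lemma rho_mono {Ω : Type} [MeasurableSpace Ω] {P : Measure Ω} {n : ℕ}
    {b : ℕ → ℤ × ℤ → Ω → ℝ} (hb : IsMBRWBase P (2 ^ n) n b) {k₀ k₀' : ℕ} (h : k₀ ≤ k₀')
    (x y : ℤ × ℤ) :
    ∫ ω, (mbrwSum (2 ^ n) k₀' n b x ω - mbrwSum (2 ^ n) k₀' n b y ω) ^ 2 ∂P
      ≤ ∫ ω, (mbrwSum (2 ^ n) k₀ n b x ω - mbrwSum (2 ^ n) k₀ n b y ω) ^ 2 ∂P := by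
  rw [rho_formula hb k₀ x y, rho_formula hb k₀' x y]
  refine Finset.sum_le_sum_of_subset_of_nonneg (Finset.Icc_subset_Icc_left h) ?_
  intro k _ _
  have h1 : ((corners k x).image (modN (2 ^ n)) ∩ (corners k y).image (modN (2 ^ n))).card
      ≤ ((corners k x).image (modN (2 ^ n))).card :=
    Finset.card_le_card (Finset.inter_subset_left)
  have h2 : ((corners k x).image (modN (2 ^ n)) ∩ (corners k y).image (modN (2 ^ n))).card
      ≤ ((corners k y).image (modN (2 ^ n))).card :=
    Finset.card_le_card (Finset.inter_subset_right)
  have h1' : (((corners k x).image (modN (2 ^ n))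
      ∩ (corners k y).image (modN (2 ^ n))).card : ℝ)
      ≤ (((corners k x).image (modN (2 ^ n))).card : ℝ) := by exact_mod_cast h1
  have h2' : (((corners k x).image (modN (2 ^ n))
      ∩ (corners k y).image (modN (2 ^ n))).card : ℝ)
      ≤ (((corners k y).image (modN (2 ^ n))).card : ℝ) := by exact_mod_cast h2
  have hinv : (0:ℝ) ≤ ((2 : ℝ) ^ (2 * k))⁻¹ := by positivity
  refine mul_nonneg (by linarith) hinv

lemma image_corners_congr {N k : ℕ} {z y : ℤ × ℤ} (h : simRel N z y) :
    (corners k z).image (modN N) = (corners k y).image (modN N) := by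
  have key : ∀ (a c : ℤ × ℤ), simRel N a c →
      (corners k a).image (modN N) ⊆ (corners k c).image (modN N) := by
    intro a c hac
    intro w hw
    rw [Finset.mem_image] at hw ⊢
    obtain ⟨v, hv, rfl⟩ := hw
    refine ⟨v - (a - c), ?_, ?_⟩
    · rw [mem_corners] at hv ⊢
      simp only [Prod.fst_sub, Prod.snd_sub]
      constructor
      · constructor <;> [skip; skip] <;> · have := hv.1; omega
      · constructor <;> [skip; skip] <;> · have := hv.2; omega
    · obtain ⟨t1, ht1⟩ := hac.1
      obtain ⟨t2, ht2⟩ := hac.2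
      simp only [modN, Prod.fst_sub, Prod.snd_sub, Prod.mk.injEq]
      constructor
      · rw [ht1, Int.sub_emod, Int.mul_emod_right, sub_zero, Int.emod_emod_of_dvd _ dvd_rfl]
      · rw [ht2, Int.sub_emod, Int.mul_emod_right, sub_zero, Int.emod_emod_of_dvd _ dvd_rfl]
  have hsym : simRel N y z := ⟨(dvd_sub_comm).mp h.1, (dvd_sub_comm).mp h.2⟩
  exact le_antisymm (key z y h) (key y z hsym)

lemma min_max_helper (a b c : ℤ) : a ⊓ b + 1 - ((a - c) ⊔ (b - c)) = c + 1 - |a - b| := by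
  rcases le_total a b with hab | hab
  · rw [inf_eq_left.mpr hab, sup_eq_right.mpr (sub_le_sub_right hab c), abs_sub_comm,
      abs_of_nonneg (sub_nonneg.mpr hab)]
    ring
  · rw [inf_eq_right.mpr hab, sup_eq_left.mpr (sub_le_sub_right hab c),
      abs_of_nonneg (sub_nonneg.mpr hab)]
    ring

lemma card_helper (a b : ℤ) (k : ℕ) :
    ((2:ℤ)^k - |a - b|).toNat
      = (a ⊓ b + 1 - ((a - ((2:ℤ)^k - 1)) ⊔ (b - ((2:ℤ)^k - 1)))).toNat := by
  rw [min_max_helper a b ((2:ℤ)^k - 1)]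
  congr 1
  ring

lemma overlap_card {N k : ℕ} (hk : 2 ^ k ≤ N) (x z : ℤ × ℤ) :
    ((2:ℤ) ^ k - |x.1 - z.1|).toNat * ((2:ℤ) ^ k - |x.2 - z.2|).toNat
      ≤ (((corners k x).image (modN N)) ∩ ((corners k z).image (modN N))).card := by
  have hsub : corners k x ∩ corners k z ⊆ corners k x := Finset.inter_subset_left
  have hinj : Set.InjOn (modN N) (corners k x ∩ corners k z : Finset (ℤ × ℤ)) :=
    (corners_injOn hk x).mono (by exact_mod_cast hsub)
  have h1 : ((corners k x ∩ corners k z).image (modN N)).card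
      = (corners k x ∩ corners k z).card := Finset.card_image_of_injOn hinj
  have h2 : (corners k x ∩ corners k z).image (modN N)
      ⊆ ((corners k x).image (modN N)) ∩ ((corners k z).image (modN N)) :=
    Finset.image_inter_subset _ _ _
  have h3 := Finset.card_le_card h2
  rw [h1] at h3
  refine le_trans (le_of_eq ?_) h3
  have hicc : corners k x ∩ corners k z
      = Finset.Icc ((x - ((2:ℤ)^k - 1, (2:ℤ)^k - 1)) ⊔ (z - ((2:ℤ)^k - 1, (2:ℤ)^k - 1)))
          (x ⊓ z) := by
    ext w
    simp only [Finset.mem_inter, corners, Finset.mem_Icc, sup_le_iff, le_inf_iff]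
    tauto
  rw [hicc, Finset.card_Icc_prod, Int.card_Icc, Int.card_Icc]
  have e1 : ((x - ((2:ℤ)^k - 1, (2:ℤ)^k - 1)) ⊔ (z - ((2:ℤ)^k - 1, (2:ℤ)^k - 1))).1
      = (x.1 - ((2:ℤ)^k - 1)) ⊔ (z.1 - ((2:ℤ)^k - 1)) := rfl
  have e2 : ((x - ((2:ℤ)^k - 1, (2:ℤ)^k - 1)) ⊔ (z - ((2:ℤ)^k - 1, (2:ℤ)^k - 1))).2
      = (x.2 - ((2:ℤ)^k - 1)) ⊔ (z.2 - ((2:ℤ)^k - 1)) := rfl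
  have e3 : (x ⊓ z).1 = x.1 ⊓ z.1 := rfl
  have e4 : (x ⊓ z).2 = x.2 ⊓ z.2 := rfl
  rw [e1, e2, e3, e4, card_helper x.1 z.1 k, card_helper x.2 z.2 k]

lemma geom_tail {k₀ n : ℕ} (h : k₀ ≤ n) :
    ∑ k ∈ Finset.Icc k₀ n, ((2:ℝ) ^ k)⁻¹ ≤ 2 * ((2:ℝ) ^ k₀)⁻¹ := by
  have h1 : ∀ k, ((2:ℝ) ^ k)⁻¹ = ((2:ℝ)⁻¹) ^ k := fun k => (inv_pow 2 k).symm
  simp only [h1]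
  rw [← Finset.Ico_add_one_right_eq_Icc, geom_sum_Ico (by norm_num) (by omega)]
  have h2 : (0:ℝ) < (2:ℝ)⁻¹ ^ (n + 1) := by positivity
  have h3 : ((2:ℝ)⁻¹ ^ (n+1) - (2:ℝ)⁻¹ ^ k₀) / ((2:ℝ)⁻¹ - 1)
      = 2 * ((2:ℝ)⁻¹ ^ k₀ - (2:ℝ)⁻¹ ^ (n+1)) := by
    field_simp
    ring
  rw [h3]
  nlinarith [h2]

lemma rho_le_of_close {Ω : Type} [MeasurableSpace Ω] {P : Measure Ω} {n k₀ : ℕ}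
    {b : ℕ → ℤ × ℤ → Ω → ℝ} (hb : IsMBRWBase P (2 ^ n) n b) (hk₀n : k₀ ≤ n)
    (x y z : ℤ × ℤ) (hz : simRel (2 ^ n) z y) (D : ℝ)
    (h1 : |((x.1 - z.1 : ℤ) : ℝ)| ≤ D) (h2 : |((x.2 - z.2 : ℤ) : ℝ)| ≤ D)
    (hD : D ≤ (2:ℝ) ^ k₀) :
    ∫ ω, (mbrwSum (2 ^ n) k₀ n b x ω - mbrwSum (2 ^ n) k₀ n b y ω) ^ 2 ∂P
      ≤ 8 * D * ((2:ℝ) ^ k₀)⁻¹ := by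
  have hD0 : (0:ℝ) ≤ D := le_trans (abs_nonneg _) h1
  rw [rho_formula hb k₀ x y]
  have hterm : ∀ k ∈ Finset.Icc k₀ n,
      ((((corners k x).image (modN (2 ^ n))).card : ℝ)
        + (((corners k y).image (modN (2 ^ n))).card : ℝ)
        - 2 * (((corners k x).image (modN (2 ^ n))
            ∩ (corners k y).image (modN (2 ^ n))).card : ℝ)) * ((2 : ℝ) ^ (2 * k))⁻¹
      ≤ 4 * D * ((2:ℝ) ^ k)⁻¹ := by
    intro k hk
    obtain ⟨hk1, hk2⟩ := Finset.mem_Icc.mp hk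
    have hkn : 2 ^ k ≤ 2 ^ n := Nat.pow_le_pow_right (by norm_num) hk2
    have hAk : (2:ℝ) ^ k₀ ≤ (2:ℝ) ^ k := pow_le_pow_right₀ (by norm_num) hk1
    set A : ℝ := (2:ℝ) ^ k with hA
    have hA0 : (0:ℝ) < A := by positivity
    rw [card_image_corners hkn x, card_image_corners hkn y]
    -- lower bound on the intersection cardinality
    have hov := overlap_card hkn x z
    rw [image_corners_congr hz] at hov
    have hovR : ((((2:ℤ) ^ k - |x.1 - z.1|).toNat * ((2:ℤ) ^ k - |x.2 - z.2|).toNat : ℕ) : ℝ)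
        ≤ (((corners k x).image (modN (2 ^ n))
            ∩ (corners k y).image (modN (2 ^ n))).card : ℝ) := by exact_mod_cast hov
    have ht1 : (A - D) ≤ ((((2:ℤ) ^ k - |x.1 - z.1|).toNat : ℕ) : ℝ) := by
      have hle : ((2:ℤ) ^ k - |x.1 - z.1| : ℤ) ≤ (((2:ℤ) ^ k - |x.1 - z.1|).toNat : ℤ) :=
        Int.self_le_toNat _
      have : (((2:ℤ) ^ k - |x.1 - z.1| : ℤ) : ℝ) ≤ ((((2:ℤ) ^ k - |x.1 - z.1|).toNat : ℕ) : ℝ) := by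
        exact_mod_cast hle
      refine le_trans ?_ this
      have h1' := h1
      rw [hA]
      push_cast at h1' ⊢
      linarith
    have ht2 : (A - D) ≤ ((((2:ℤ) ^ k - |x.2 - z.2|).toNat : ℕ) : ℝ) := by
      have hle : ((2:ℤ) ^ k - |x.2 - z.2| : ℤ) ≤ (((2:ℤ) ^ k - |x.2 - z.2|).toNat : ℤ) :=
        Int.self_le_toNat _
      have : (((2:ℤ) ^ k - |x.2 - z.2| : ℤ) : ℝ) ≤ ((((2:ℤ) ^ k - |x.2 - z.2|).toNat : ℕ) : ℝ) := by
        exact_mod_cast hle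
      refine le_trans ?_ this
      have h2' := h2
      rw [hA]
      push_cast at h2' ⊢
      linarith
    have hADnn : (0:ℝ) ≤ A - D := by linarith
    have hm : (A - D) * (A - D)
        ≤ (((corners k x).image (modN (2 ^ n))
            ∩ (corners k y).image (modN (2 ^ n))).card : ℝ) := by
      refine le_trans (mul_le_mul ht1 ht2 hADnn (le_trans hADnn ht1)) ?_
      refine le_trans (le_of_eq ?_) hovR
      push_cast
      ring
    set m : ℝ := (((corners k x).image (modN (2 ^ n))
        ∩ (corners k y).image (modN (2 ^ n))).card : ℝ)
    have hcast1 : (((2 ^ k * 2 ^ k : ℕ)) : ℝ) = A * A := by rw [hA]; push_cast; ring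
    have hcast2 : ((2:ℝ) ^ (2 * k))⁻¹ = (A * A)⁻¹ := by rw [hA, two_mul, pow_add]
    rw [hcast1, hcast2]
    have key : A * A + A * A - 2 * m ≤ 4 * D * A := by nlinarith [hm, hD0]
    have hfin : (4 * D * A) * (A * A)⁻¹ = 4 * D * A⁻¹ := by
      field_simp
    calc (A * A + A * A - 2 * m) * (A * A)⁻¹
        ≤ (4 * D * A) * (A * A)⁻¹ :=
          mul_le_mul_of_nonneg_right key (by positivity)
      _ = 4 * D * A⁻¹ := hfin
  calc ∑ k ∈ Finset.Icc k₀ n, _ ≤ ∑ k ∈ Finset.Icc k₀ n, 4 * D * ((2:ℝ) ^ k)⁻¹ :=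
        Finset.sum_le_sum hterm
    _ = 4 * D * ∑ k ∈ Finset.Icc k₀ n, ((2:ℝ) ^ k)⁻¹ := by rw [Finset.mul_sum]
    _ ≤ 4 * D * (2 * ((2:ℝ) ^ k₀)⁻¹) := by
        refine mul_le_mul_of_nonneg_left (geom_tail hk₀n) (by positivity)
    _ = 8 * D * ((2:ℝ) ^ k₀)⁻¹ := by ring

lemma abs_fst_le_euclNorm (v : ℤ × ℤ) : |(v.1 : ℝ)| ≤ euclNorm v := by
  rw [euclNorm, ← Real.sqrt_sq_eq_abs]
  exact Real.sqrt_le_sqrt (by nlinarith [sq_nonneg ((v.2 : ℝ))])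

lemma abs_snd_le_euclNorm (v : ℤ × ℤ) : |(v.2 : ℝ)| ≤ euclNorm v := by
  rw [euclNorm, ← Real.sqrt_sq_eq_abs]
  exact Real.sqrt_le_sqrt (by nlinarith [sq_nonneg ((v.1 : ℝ))])

/-- **Properties of the truncated-MBRW increment variances**
`ρ_{N,k₀}(x,y) = E[(S_x^{N,k₀} - S_y^{N,k₀})²]` (with `S^{N,k₀} = mbrwSum N k₀ n b`):
(i) `ρ_{N,k₀}(x,y)` is nonincreasing in `k₀`, and
(ii) `limsup_{k₀→∞} limsup_{N→∞} sup{ρ_{N,k₀}(x,y) : d^N(x,y) ≤ 2^{√k₀}} = 0`. -/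
theorem rho_monotone_and_small {Ω : Type} [MeasurableSpace Ω]
    (P : Measure Ω) [IsProbabilityMeasure P] (b : ℕ → ℕ → ℤ × ℤ → Ω → ℝ)
    (hb : ∀ n : ℕ, IsMBRWBase P (2 ^ n) n (b n)) :
    (∀ n k₀ k₀' : ℕ, k₀ ≤ k₀' → k₀' ≤ n → ∀ x ∈ V (2 ^ n), ∀ y ∈ V (2 ^ n),
        ∫ ω, (mbrwSum (2 ^ n) k₀' n (b n) x ω - mbrwSum (2 ^ n) k₀' n (b n) y ω) ^ 2 ∂P
          ≤ ∫ ω,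
              (mbrwSum (2 ^ n) k₀ n (b n) x ω - mbrwSum (2 ^ n) k₀ n (b n) y ω) ^ 2 ∂P) ∧
    (∀ ε : ℝ, 0 < ε → ∃ K : ℕ, ∀ k₀ : ℕ, K ≤ k₀ → ∃ M : ℕ, ∀ n : ℕ, M ≤ n → k₀ ≤ n →
        ∀ x ∈ V (2 ^ n), ∀ y ∈ V (2 ^ n),
          dN (2 ^ n) x y ≤ (2 : ℝ) ^ (Real.sqrt k₀) →
          ∫ ω, (mbrwSum (2 ^ n) k₀ n (b n) x ω - mbrwSum (2 ^ n) k₀ n (b n) y ω) ^ 2 ∂P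
            ≤ ε) := by
  constructor
  · intro n k₀ k₀' hle _ x _ y _
    exact rho_mono (hb n) hle x y
  · intro ε hε
    obtain ⟨K₂, hK₂⟩ := pow_unbounded_of_one_lt (R := ℝ) (17 / ε) one_lt_two
    refine ⟨max 4 (2 * K₂), fun k₀ hk₀ => ⟨0, fun n _ hk₀n x _ y _ hdist => ?_⟩⟩
    have h4 : (4:ℕ) ≤ k₀ := le_trans (le_max_left _ _) hk₀
    have hK2 : 2 * K₂ ≤ k₀ := le_trans (le_max_right _ _) hk₀
    -- pick z realizing (almost) the torus distance
    have hne : {r : ℝ | ∃ z : ℤ × ℤ, simRel (2 ^ n) z y ∧ r = euclNorm (x - z)}.Nonempty :=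
      ⟨euclNorm (x - y), y, ⟨by simp, by simp⟩, rfl⟩
    obtain ⟨r, ⟨z, hzy, rfl⟩, hr⟩ := Real.lt_sInf_add_pos hne one_pos
    set D : ℝ := (2 : ℝ) ^ (Real.sqrt k₀) + 1 with hD
    have hzD : euclNorm (x - z) ≤ D := by
      have : sInf {r : ℝ | ∃ z : ℤ × ℤ, simRel (2 ^ n) z y ∧ r = euclNorm (x - z)}
          = dN (2 ^ n) x y := rfl
      rw [this] at hr
      rw [hD]
      linarith
    have h1 : |((x.1 - z.1 : ℤ) : ℝ)| ≤ D := by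
      have := abs_fst_le_euclNorm (x - z)
      have he : ((x - z).1 : ℝ) = ((x.1 - z.1 : ℤ) : ℝ) := by norm_cast
      rw [he] at this
      linarith
    have h2 : |((x.2 - z.2 : ℤ) : ℝ)| ≤ D := by
      have := abs_snd_le_euclNorm (x - z)
      have he : ((x - z).2 : ℝ) = ((x.2 - z.2 : ℤ) : ℝ) := by norm_cast
      rw [he] at this
      linarith
    -- numeric bounds via S = 2^(k₀/2)
    set S : ℝ := (2 : ℝ) ^ ((k₀ : ℝ) / 2) with hS
    have hS0 : (0:ℝ) < S := Real.rpow_pos_of_pos two_pos _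
    have hsqrt : Real.sqrt k₀ ≤ (k₀ : ℝ) / 2 := by
      have h4' : (4:ℝ) ≤ (k₀ : ℝ) := by exact_mod_cast h4
      rw [show (k₀:ℝ)/2 = Real.sqrt (((k₀:ℝ)/2)^2) from (Real.sqrt_sq (by positivity)).symm]
      exact Real.sqrt_le_sqrt (by nlinarith)
    have hpow1 : (2 : ℝ) ^ (Real.sqrt k₀) ≤ S :=
      Real.rpow_le_rpow_of_exponent_le one_le_two hsqrt
    have hone : (1:ℝ) ≤ S := by
      rw [show (1:ℝ) = (2:ℝ) ^ (0:ℝ) from (Real.rpow_zero 2).symm]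
      exact Real.rpow_le_rpow_of_exponent_le one_le_two (by positivity)
    have hD2S : D ≤ 2 * S := by rw [hD]; linarith
    have hSS : S * S = (2:ℝ) ^ k₀ := by
      rw [hS, ← Real.rpow_add two_pos, ← Real.rpow_natCast 2 k₀]
      norm_num
    have htwoS : (2:ℝ) ≤ S := by
      rw [show (2:ℝ) = (2:ℝ) ^ (1:ℝ) from (Real.rpow_one 2).symm]
      refine Real.rpow_le_rpow_of_exponent_le one_le_two ?_
      have h4' : (4:ℝ) ≤ (k₀ : ℝ) := by exact_mod_cast h4
      linarith
    have hDk : D ≤ (2:ℝ) ^ k₀ := by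
      rw [← hSS]
      nlinarith
    have hbound := rho_le_of_close (hb n) hk₀n x y z hzy D h1 h2 hDk
    refine le_trans hbound ?_
    -- 8 * D * (2^k₀)⁻¹ ≤ ε
    have hSK : (2:ℝ) ^ (K₂ : ℝ) ≤ S := by
      refine Real.rpow_le_rpow_of_exponent_le one_le_two ?_
      have : (2 * K₂ : ℝ) ≤ (k₀ : ℝ) := by exact_mod_cast hK2
      linarith
    have hSbig : 17 / ε < S := by
      refine lt_of_lt_of_le ?_ hSK
      rw [Real.rpow_natCast]
      exact hK₂
    have hinvS : S⁻¹ < ε / 17 := by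
      have h17 : (0:ℝ) < 17 / ε := by positivity
      have := inv_strictAnti₀ h17 hSbig
      rwa [inv_div] at this
    calc 8 * D * ((2:ℝ) ^ k₀)⁻¹ ≤ 8 * (2 * S) * ((2:ℝ) ^ k₀)⁻¹ := by
          refine mul_le_mul_of_nonneg_right (by linarith) (by positivity)
      _ = 16 * S⁻¹ := by
          rw [← hSS]
          field_simp
          ring
      _ ≤ 16 * (ε / 17) := by linarith
      _ ≤ ε := by linarith

end
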